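/- Let A be an abelian group, E : A → ℝ a group homomorphism, G ⊆ A a monoid of curve classes, and N ⊆ A a module of perturbed classes over G. For each a ∈ A let (C(a)_*, ∂) be a chain complex of real vector spaces (∂ of degree −1, ∂∘∂ = 0), and for each β ∈ G⁺ and each a ∈ A let m_{1,β} : C(a)_* → C(a+β)_{*−1} be a linear map of degree −1; set m_{1,0} := ∂. Assume: (i) for every β ∈ G and every a ∈ A, the (finite) sum Σ_{β₁,β₂ ∈ G, β₁+β₂=β} m_{1,β₁}∘m_{1,β₂} = 0 as a map C(a)_* → C(a+β)_{*−2}; (ii) H₁(C(a), ∂) = 0 for every a ∈ A, i.e. every x ∈ C(a)₁ with ∂x = 0 lies in ∂(C(a)₂); (iii) there are elements N(η) ∈ C(η)₁ and N⁰(η) ∈ C(η)₀ for each η ∈ N, with N⁰(η) = 0 whenever η ∉ G, such that for every η ∈ N the (finite) sum ∂(N(η)) + Σ_{β ∈ G⁺, η−β ∈ N} m_{1,β}(N(η−β)) equals N⁰(η). Then N⁰(0) is a boundary: N⁰(0) ∈ ∂(C(0)₁). -/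

import Mathlib

open Set

private lemma finite_inter_Icc {s : Set ℝ} (hacc : ∀ x : ℝ, ¬ AccPt x (Filter.principal s))
    (a b : ℝ) : (s ∩ Set.Icc a b).Finite := by
  by_contra h
  obtain ⟨x, -, hx⟩ := Set.Infinite.exists_accPt_of_subset_isCompact h isCompact_Icc
    inter_subset_right
  exact hacc x (hx.mono (Filter.principal_mono.2 inter_subset_left))

private lemma sublevel_finite {A : Type} (E : A → ℝ) (S : Set A)
    (hacc : ∀ x : ℝ, ¬ AccPt x (Filter.principal (E '' S)))
    (hfib : ∀ c : ℝ, {η ∈ S | E η = c}.Finite) (a b : ℝ) :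
    {η ∈ S | E η ∈ Set.Icc a b}.Finite := by
  have him : (E '' S ∩ Set.Icc a b).Finite := finite_inter_Icc hacc a b
  have hsub : {η ∈ S | E η ∈ Set.Icc a b} ⊆ ⋃ c ∈ E '' S ∩ Set.Icc a b, {η ∈ S | E η = c} := by
    intro η hη
    exact Set.mem_biUnion ⟨⟨η, hη.1, rfl⟩, hη.2⟩ ⟨hη.1, rfl⟩
  exact (him.biUnion fun c _ => hfib c).subset hsub



open Set Classical in
/-- The single-class correction family: the image of `v ∈ C(a)` under the total deformed
differential, viewed as a family indexed by target classes `b`. -/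
private noncomputable def zc {A V : Type} [AddCommGroup A] [DecidableEq A]
    [AddCommGroup V] [Module ℝ V] (G : Set A) (d : V →ₗ[ℝ] V) (m₁ : A → (V →ₗ[ℝ] V))
    (a : A) (v : V) (b : A) : V :=
  (if b = a then d v else 0) + (if b - a ∈ G ∧ b - a ≠ 0 then m₁ (b - a) v else 0)

open Classical in
private lemma zc_key {A V : Type} [AddCommGroup A] [DecidableEq A]
    [AddCommGroup V] [Module ℝ V]
    (G N : Set A) (d : V →ₗ[ℝ] V) (m₁ : A → (V →ₗ[ℝ] V))
    (hm₁_zero : m₁ 0 = d)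
    (hGadd : ∀ ⦃β₁ β₂ : A⦄, β₁ ∈ G → β₂ ∈ G → β₁ + β₂ ∈ G)
    (hG0 : (0 : A) ∈ G)
    (hNadd : ∀ ⦃η β : A⦄, η ∈ N → β ∈ G → η + β ∈ N)
    (hSfin : ∀ η : A, {b : A | b ∈ G ∧ b ≠ 0 ∧ η - b ∈ N}.Finite)
    (hPfin : ∀ δ : A, {q : A × A | q.1 ∈ G ∧ q.2 ∈ G ∧ q.1 + q.2 = δ}.Finite)
    (a : A) (ha : a ∈ N) (v : V)
    (hsqv : ∀ δ ∈ G,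
      (∑ᶠ p ∈ {q : A × A | q.1 ∈ G ∧ q.2 ∈ G ∧ q.1 + q.2 = δ}, m₁ p.1 (m₁ p.2 v)) = 0)
    (η : A) :
    d (zc G d m₁ a v η)
      + (∑ᶠ β ∈ {b : A | b ∈ G ∧ b ≠ 0 ∧ η - b ∈ N}, m₁ β (zc G d m₁ a v (η - β))) = 0 := by
  set δ : A := η - a with hδdef
  have hTf := hSfin η
  have hmemTf : ∀ b : A, b ∈ hTf.toFinset ↔ (b ∈ G ∧ b ≠ 0 ∧ η - b ∈ N) := by
    intro b; rw [Set.Finite.mem_toFinset]; rfl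
  have h0T : (0 : A) ∉ hTf.toFinset := by
    intro h; exact ((hmemTf 0).1 h).2.1 rfl
  -- convert the finsum to a Finset sum
  rw [finsum_mem_eq_finite_toFinset_sum _ hTf]
  -- absorb the `d` term as the `β = 0` term
  have habs : d (zc G d m₁ a v η) = m₁ 0 (zc G d m₁ a v (η - 0)) := by
    rw [hm₁_zero, sub_zero]
  rw [habs, ← Finset.sum_insert (f := fun β => m₁ β (zc G d m₁ a v (η - β))) h0T]
  set T₀ : Finset A := insert 0 hTf.toFinset with hT₀def
  have hmemT₀ : ∀ b : A, b ∈ T₀ → b ∈ G := by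
    intro b hb
    rcases Finset.mem_insert.1 hb with h | h
    · rw [h]; exact hG0
    · exact ((hmemTf b).1 h).1
  -- split each summand into its two pieces
  have hsplit : ∀ β : A,
      m₁ β (zc G d m₁ a v (η - β))
        = (if η - β = a then m₁ β (m₁ 0 v) else 0)
          + (if η - β - a ∈ G ∧ η - β - a ≠ 0 then m₁ β (m₁ (η - β - a) v) else 0) := by
    intro β
    rw [zc, map_add, apply_ite (m₁ β), apply_ite (m₁ β), map_zero, hm₁_zero]
  simp only [hsplit]
  rw [Finset.sum_add_distrib]
  by_cases hδG : δ ∈ G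
  · -- the pairs Finset
    have hPf := hPfin δ
    set Pf : Finset (A × A) := hPf.toFinset with hPfdef
    have hmemPf : ∀ p : A × A, p ∈ Pf ↔ (p.1 ∈ G ∧ p.2 ∈ G ∧ p.1 + p.2 = δ) := by
      intro p; rw [hPfdef, Set.Finite.mem_toFinset]; rfl
    have key : ∑ p ∈ Pf, m₁ p.1 (m₁ p.2 v) = 0 := by
      rw [← finsum_mem_eq_finite_toFinset_sum _ hPf]
      exact hsqv δ hδG
    have hδT : δ ∈ T₀ := by
      by_cases h0 : δ = 0
      · rw [h0]; exact Finset.mem_insert_self _ _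
      · refine Finset.mem_insert_of_mem ((hmemTf δ).2 ⟨hδG, h0, ?_⟩)
        have : η - δ = a := by rw [hδdef]; abel
        rw [this]; exact ha
    -- first sum = sum over pairs with second component 0
    have h1 : (∑ β ∈ T₀, if η - β = a then m₁ β (m₁ 0 v) else 0)
        = ∑ p ∈ Pf.filter (fun p => p.2 = 0), m₁ p.1 (m₁ p.2 v) := by
      have hfilter : Pf.filter (fun p => p.2 = 0) = {(δ, 0)} := by
        ext p
        simp only [Finset.mem_filter, hmemPf, Finset.mem_singleton]
        constructor
        · rintro ⟨⟨h1, h2, h3⟩, h4⟩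
          have : p.1 = δ := by rw [← h3, h4, add_zero]
          exact Prod.ext this h4
        · rintro rfl
          exact ⟨⟨hδG, hG0, add_zero δ⟩, rfl⟩
      rw [hfilter, Finset.sum_singleton]
      rw [Finset.sum_eq_single_of_mem δ hδT]
      · rw [if_pos (by rw [hδdef]; abel)]
      · intro b _ hbne
        rw [if_neg]
        intro h
        apply hbne
        rw [hδdef, ← h]; abel
    -- second sum = sum over pairs with second component ≠ 0
    have h2 : (∑ β ∈ T₀, if η - β - a ∈ G ∧ η - β - a ≠ 0 then m₁ β (m₁ (η - β - a) v) else 0)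
        = ∑ p ∈ Pf.filter (fun p => ¬ p.2 = 0), m₁ p.1 (m₁ p.2 v) := by
      rw [← Finset.sum_filter]
      refine Finset.sum_nbij' (fun β => (β, η - β - a)) (fun p => p.1) ?_ ?_ ?_ ?_ ?_
      · intro β hβ
        obtain ⟨hβT, hc1, hc2⟩ := Finset.mem_filter.1 hβ
        refine Finset.mem_filter.2 ⟨(hmemPf _).2 ⟨hmemT₀ β hβT, hc1, by rw [hδdef]; show β + (η - β - a) = η - a; abel⟩, hc2⟩
      · intro p hp
        obtain ⟨hpPf, hp2⟩ := Finset.mem_filter.1 hp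
        obtain ⟨hp1G, hp2G, hpsum⟩ := (hmemPf p).1 hpPf
        have hηp : η - p.1 - a = p.2 := by
          have h' : p.1 + p.2 + a = η := by
            rw [hpsum, hδdef]; abel
          rw [← h']; abel
        refine Finset.mem_filter.2 ⟨?_, by rw [hηp]; exact ⟨hp2G, hp2⟩⟩
        show p.1 ∈ T₀
        by_cases h0 : p.1 = 0
        · rw [h0]; exact Finset.mem_insert_self _ _
        · refine Finset.mem_insert_of_mem ((hmemTf p.1).2 ⟨hp1G, h0, ?_⟩)
          have : η - p.1 = a + p.2 := by rw [← hηp]; abel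
          rw [this]; exact hNadd ha hp2G
      · intro β _; rfl
      · intro p hp
        obtain ⟨hpPf, _⟩ := Finset.mem_filter.1 hp
        obtain ⟨_, _, hpsum⟩ := (hmemPf p).1 hpPf
        have h' : p.1 + p.2 + a = η := by rw [hpsum, hδdef]; abel
        show (p.1, η - p.1 - a) = p
        have hηp : η - p.1 - a = p.2 := by rw [← h']; abel
        rw [hηp]
      · intro β _; rfl
    rw [h1, h2, Finset.sum_filter_add_sum_filter_not, key]
  · -- δ ∉ G : every term vanishes
    rw [Finset.sum_eq_zero, Finset.sum_eq_zero, add_zero]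
    · intro β hβ
      rw [if_neg]
      rintro ⟨h1, -⟩
      apply hδG
      have : δ = β + (η - β - a) := by rw [hδdef]; abel
      rw [this]; exact hGadd (hmemT₀ β hβ) h1
    · intro β hβ
      rw [if_neg]
      intro h
      apply hδG
      have : δ = β := by rw [hδdef, ← h]; abel
      rw [this]; exact hmemT₀ β hβ



/-- A submonoid `G` of an abelian group `A` with energy homomorphism `E : A →+ ℝ` is a
*monoid of curve classes* if energies of its elements are nonnegative and vanish only at
`0`, the image `E(G)` has no accumulation point in `ℝ`, and each energy level contains
only finitely many classes. -/
structure IsCurveClassMonoid {A : Type} [AddCommGroup A] (E : A →+ ℝ) (G : Set A) : Prop where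
  zero_mem : (0 : A) ∈ G
  add_mem : ∀ ⦃β₁ β₂ : A⦄, β₁ ∈ G → β₂ ∈ G → β₁ + β₂ ∈ G
  nonneg : ∀ β ∈ G, 0 ≤ E β
  energy_eq_zero : ∀ β ∈ G, E β = 0 → β = 0
  discrete : ∀ x : ℝ, ¬ AccPt x (Filter.principal (E '' G))
  finite_fibers : ∀ c : ℝ, {β ∈ G | E β = c}.Finite

/-- A subset `N` of an abelian group `A` is a *module of perturbed classes* over a monoid
of curve classes `G` if `0 ∈ N`, `N + G ⊆ N`, the energy `E` is bounded below on `N`, the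
image `E(N)` has no accumulation point in `ℝ`, and each energy level contains only
finitely many classes. -/
structure IsPerturbedClassModule {A : Type} [AddCommGroup A] (E : A →+ ℝ)
    (G N : Set A) : Prop where
  zero_mem : (0 : A) ∈ N
  add_mem : ∀ ⦃η β : A⦄, η ∈ N → β ∈ G → η + β ∈ N
  bddBelow : ∃ c : ℝ, ∀ η ∈ N, c ≤ E η
  discrete : ∀ x : ℝ, ¬ AccPt x (Filter.principal (E '' N))
  finite_fibers : ∀ c : ℝ, {η ∈ N | E η = c}.Finite

/-- Abstract form of the vanishing argument for Maslov-zero Lagrangians: given a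
`G`-gapped family of chain complexes `(C(a), ∂)` with deformed differentials `m₁,β`
squaring to zero, vanishing first homology, and elements `N(η) ∈ C(η)₁`, `N⁰(η) ∈ C(η)₀`
satisfying `m₁(N) = N⁰`, the energy-zero term `N⁰(0)` is a boundary. -/
theorem energy_zero_term_is_boundary
    {A : Type} [AddCommGroup A] [DecidableEq A] (E : A →+ ℝ) (G N : Set A)
    (hG : IsCurveClassMonoid E G) (hN : IsPerturbedClassModule E G N)
    (V : Type) [AddCommGroup V] [Module ℝ V]
    (𝒞 : A → ℤ → Submodule ℝ V)
    (hInternal : DirectSum.IsInternal fun p : A × ℤ => 𝒞 p.1 p.2)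
    (d : V →ₗ[ℝ] V)
    (hd_deg : ∀ (a : A) (i : ℤ), ∀ x ∈ 𝒞 a i, d x ∈ 𝒞 a (i - 1))
    (hdd : ∀ x : V, d (d x) = 0)
    (m₁ : A → (V →ₗ[ℝ] V))
    (hm₁_zero : m₁ 0 = d)
    (hm₁_deg : ∀ β, β ∈ G → β ≠ 0 → ∀ (a : A) (i : ℤ), ∀ x ∈ 𝒞 a i,
      m₁ β x ∈ 𝒞 (a + β) (i - 1))
    -- (i) the total deformed differential squares to zero
    (hsq : ∀ β ∈ G, ∀ (a : A) (i : ℤ), ∀ x ∈ 𝒞 a i,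
      (∑ᶠ p ∈ {q : A × A | q.1 ∈ G ∧ q.2 ∈ G ∧ q.1 + q.2 = β}, m₁ p.1 (m₁ p.2 x)) = 0)
    -- (ii) vanishing of first homology of each `(C(a), ∂)`
    (hH1 : ∀ (a : A), ∀ x ∈ 𝒞 a 1, d x = 0 → ∃ y ∈ 𝒞 a 2, d y = x)
    -- (iii) the elements `N(η)` and `N⁰(η)` and the equation `m₁(N) = N⁰`
    (NN : A → V) (N0 : A → V)
    (hNN_mem : ∀ η ∈ N, NN η ∈ 𝒞 η 1)
    (hN0_mem : ∀ η ∈ N, N0 η ∈ 𝒞 η 0)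
    (hN0_vanish : ∀ η : A, η ∉ G → N0 η = 0)
    (heq : ∀ η ∈ N,
      d (NN η) + (∑ᶠ β ∈ {b : A | b ∈ G ∧ b ≠ 0 ∧ η - b ∈ N}, m₁ β (NN (η - β)))
        = N0 η) :
    ∃ y ∈ 𝒞 0 1, d y = N0 0 := by
  classical
  obtain ⟨c, hc⟩ := hN.bddBelow
  -- sub-level sets of `G` and `N` are finite
  have hGfin : ∀ B : ℝ, {β ∈ G | E β ≤ B}.Finite := by
    intro B
    refine (sublevel_finite E G hG.discrete hG.finite_fibers 0 B).subset ?_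
    intro β hβ; exact ⟨hβ.1, hG.nonneg β hβ.1, hβ.2⟩
  have hNfin : ∀ B : ℝ, {η ∈ N | E η ≤ B}.Finite := by
    intro B
    refine (sublevel_finite E N hN.discrete hN.finite_fibers c B).subset ?_
    intro η hη; exact ⟨hη.1, hc η hη.1, hη.2⟩
  have hSfin : ∀ η : A, {b : A | b ∈ G ∧ b ≠ 0 ∧ η - b ∈ N}.Finite := by
    intro η
    refine (hGfin (E η - c)).subset ?_
    rintro b ⟨hb1, -, hb3⟩
    refine ⟨hb1, ?_⟩
    have := hc _ hb3
    rw [map_sub] at this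
    linarith
  have hPfin : ∀ δ : A, {q : A × A | q.1 ∈ G ∧ q.2 ∈ G ∧ q.1 + q.2 = δ}.Finite := by
    intro δ
    refine ((hGfin (E δ)).image (fun β => (β, δ - β))).subset ?_
    rintro ⟨q1, q2⟩ ⟨h1, h2, h3⟩
    have hq2 : q2 = δ - q1 := by rw [← h3]; abel
    have e2 : 0 ≤ E q2 := hG.nonneg _ h2
    have hsum : E q1 + E q2 = E δ := by rw [← map_add, h3]
    exact ⟨q1, ⟨h1, by linarith⟩, by rw [hq2]⟩
  have hEpos : ∀ b : A, b ∈ G → b ≠ 0 → 0 < E b := by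
    intro b hb hb0
    rcases lt_or_eq_of_le (hG.nonneg b hb) with h | h
    · exact h
    · exact absurd (hG.energy_eq_zero b hb h.symm) hb0
  -- the (finitely many) negative energy levels of `N`
  set Λ : Set ℝ := E '' {x ∈ N | E x < 0} with hΛdef
  have hΛfin : Λ.Finite := by
    refine Set.Finite.image _ ((hNfin 0).subset ?_)
    rintro x ⟨h1, h2⟩; exact ⟨h1, le_of_lt h2⟩
  have hlcfin : ∀ η : A, (Λ ∩ Set.Iic (E η)).Finite := fun η => hΛfin.inter_of_left _
  have hlc_lt : ∀ x y : A, x ∈ N → E x < 0 → E y < E x →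
      (Λ ∩ Set.Iic (E y)).ncard + 1 ≤ (Λ ∩ Set.Iic (E x)).ncard := by
    intro x y hx hx0 hxy
    have hmem : E x ∈ Λ ∩ Set.Iic (E x) := ⟨⟨x, ⟨hx, hx0⟩, rfl⟩, Set.mem_Iic.2 (le_refl _)⟩
    have hsub : Λ ∩ Set.Iic (E y) ⊆ (Λ ∩ Set.Iic (E x)) \ {E x} := by
      rintro z ⟨hz1, hz2⟩
      refine ⟨⟨hz1, le_trans hz2 (le_of_lt hxy)⟩, ?_⟩
      intro h
      rw [Set.mem_singleton_iff] at h
      rw [h] at hz2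
      exact absurd (lt_of_le_of_lt hz2 hxy) (lt_irrefl _)
    have hpos : 0 < (Λ ∩ Set.Iic (E x)).ncard :=
      (Set.ncard_pos (hlcfin x)).2 ⟨E x, hmem⟩
    have hle : (Λ ∩ Set.Iic (E y)).ncard ≤ ((Λ ∩ Set.Iic (E x)) \ {E x}).ncard :=
      Set.ncard_le_ncard hsub (hlcfin x).diff
    rw [Set.ncard_diff_singleton_of_mem hmem] at hle
    omega
  -- main induction: `W` can be gauged to vanish on the `n` lowest negative energy levels
  have main : ∀ n : ℕ, ∃ W : A → V, (∀ η ∈ N, W η ∈ 𝒞 η 1) ∧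
      (∀ η ∈ N, d (W η) + (∑ᶠ β ∈ {b : A | b ∈ G ∧ b ≠ 0 ∧ η - b ∈ N}, m₁ β (W (η - β)))
        = N0 η) ∧
      (∀ η ∈ N, E η < 0 → (Λ ∩ Set.Iic (E η)).ncard ≤ n → W η = 0) := by
    intro n
    induction n with
    | zero =>
      refine ⟨NN, hNN_mem, heq, ?_⟩
      intro η hη hη0 hcard
      exfalso
      have hne : (Λ ∩ Set.Iic (E η)).Nonempty := ⟨E η, ⟨η, ⟨hη, hη0⟩, rfl⟩, Set.mem_Iic.2 (le_refl _)⟩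
      have := (Set.ncard_pos (hlcfin η)).2 hne
      omega
    | succ n ih =>
      obtain ⟨W, hW1, hW2, hW3⟩ := ih
      set K : Set A := {a : A | a ∈ N ∧ E a < 0 ∧ (Λ ∩ Set.Iic (E a)).ncard = n + 1}
        with hKdef
      have hKset : K.Finite := by
        refine (hNfin 0).subset ?_; rintro x ⟨h1, h2, -⟩; exact ⟨h1, le_of_lt h2⟩
      -- at the next energy level, `W` is a `d`-cycle
      have hclosed : ∀ a : A, a ∈ K → d (W a) = 0 := by
        rintro a ⟨haN, ha0, halc⟩
        have haG : a ∉ G := fun h => absurd ha0 (not_lt.2 (hG.nonneg a h))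
        have h0 : N0 a = 0 := hN0_vanish a haG
        have hzero : ∀ β ∈ {b : A | b ∈ G ∧ b ≠ 0 ∧ a - b ∈ N},
            m₁ β (W (a - β)) = 0 := by
          rintro β ⟨hβG, hβ0, hβN⟩
          have hEβ := hEpos β hβG hβ0
          have hE' : E (a - β) < E a := by rw [map_sub]; linarith
          have hW0 : W (a - β) = 0 := by
            apply hW3 _ hβN (lt_trans hE' ha0)
            have := hlc_lt a (a - β) haN ha0 hE'
            omega
          rw [hW0, map_zero]
        have h := hW2 a haN
        rw [finsum_mem_eq_zero_of_forall_eq_zero hzero, add_zero, h0] at h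
        exact h
      -- choose primitives for `W` at those classes
      have hY : ∀ a : A, ∃ y : V, y ∈ 𝒞 a 2 ∧ d y = (if a ∈ K then W a else 0) := by
        intro a
        by_cases h : a ∈ K
        · obtain ⟨y, hy1, hy2⟩ := hH1 a (W a) (hW1 a h.1) (hclosed a h)
          exact ⟨y, hy1, by rw [if_pos h, hy2]⟩
        · exact ⟨0, Submodule.zero_mem _, by rw [if_neg h, map_zero]⟩
      choose Y hY2 hYd using hY
      have hmemKf : ∀ a : A, a ∈ hKset.toFinset ↔ a ∈ K :=
        fun a => Set.Finite.mem_toFinset _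
      refine ⟨fun b => W b - ∑ a ∈ hKset.toFinset, zc G d m₁ a (Y a) b, ?_, ?_, ?_⟩
      · -- degree / class membership
        intro η hη
        refine sub_mem (hW1 η hη) (Submodule.sum_mem _ ?_)
        intro a _
        rw [zc]
        have h21 : (2 : ℤ) - 1 = 1 := by norm_num
        refine add_mem ?_ ?_
        · by_cases h : η = a
          · rw [if_pos h, h]
            have := hd_deg a 2 (Y a) (hY2 a)
            rwa [h21] at this
          · rw [if_neg h]; exact Submodule.zero_mem _
        · by_cases h : η - a ∈ G ∧ η - a ≠ 0
          · rw [if_pos h]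
            have := hm₁_deg (η - a) h.1 h.2 a 2 (Y a) (hY2 a)
            have he : a + (η - a) = η := by abel
            rwa [he, h21] at this
          · rw [if_neg h]; exact Submodule.zero_mem _
      · -- the deformed equation is preserved
        intro η hη
        show d (W η - ∑ a ∈ hKset.toFinset, zc G d m₁ a (Y a) η)
          + (∑ᶠ β ∈ {b : A | b ∈ G ∧ b ≠ 0 ∧ η - b ∈ N},
              m₁ β (W (η - β) - ∑ a ∈ hKset.toFinset, zc G d m₁ a (Y a) (η - β))) = N0 η
        have key : ∀ a ∈ hKset.toFinset,
            d (zc G d m₁ a (Y a) η)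
              + ∑ β ∈ (hSfin η).toFinset, m₁ β (zc G d m₁ a (Y a) (η - β)) = 0 := by
          intro a haKf
          have haK := (hmemKf a).1 haKf
          have := zc_key G N d m₁ hm₁_zero hG.add_mem hG.zero_mem hN.add_mem hSfin hPfin
            a haK.1 (Y a) (fun δ hδ => hsq δ hδ a 2 (Y a) (hY2 a)) η
          rwa [finsum_mem_eq_finite_toFinset_sum _ (hSfin η)] at this
        have horig := hW2 η hη
        rw [finsum_mem_eq_finite_toFinset_sum _ (hSfin η)] at horig ⊢
        have lhs_eq : d (W η - ∑ a ∈ hKset.toFinset, zc G d m₁ a (Y a) η)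
            + ∑ β ∈ (hSfin η).toFinset,
                m₁ β (W (η - β) - ∑ a ∈ hKset.toFinset, zc G d m₁ a (Y a) (η - β))
            = (d (W η) + ∑ β ∈ (hSfin η).toFinset, m₁ β (W (η - β)))
              - ∑ a ∈ hKset.toFinset, (d (zc G d m₁ a (Y a) η)
                  + ∑ β ∈ (hSfin η).toFinset, m₁ β (zc G d m₁ a (Y a) (η - β))) := by
          simp only [map_sub, map_sum]
          rw [Finset.sum_sub_distrib, Finset.sum_add_distrib, Finset.sum_comm]
          abel
        rw [lhs_eq, horig, Finset.sum_eq_zero key, sub_zero]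
      · -- vanishing on the lowest `n + 1` negative energy levels
        intro η hη hη0 hcard
        show W η - ∑ a ∈ hKset.toFinset, zc G d m₁ a (Y a) η = 0
        by_cases hn : (Λ ∩ Set.Iic (E η)).ncard ≤ n
        · rw [hW3 η hη hη0 hn, Finset.sum_eq_zero, sub_zero]
          intro a haKf
          have haK := (hmemKf a).1 haKf
          rw [zc, if_neg, if_neg, add_zero]
          · rintro ⟨hg, hne⟩
            have hElt : E a < E η := by
              have := hEpos _ hg hne
              rw [map_sub] at this; linarith
            have := hlc_lt η a hη hη0 hElt
            have := haK.2.2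
            omega
          · intro h
            rw [h] at hn
            have := haK.2.2
            omega
        · have hlc : (Λ ∩ Set.Iic (E η)).ncard = n + 1 := by omega
          have hηK : η ∈ K := ⟨hη, hη0, hlc⟩
          rw [Finset.sum_eq_single_of_mem η ((hmemKf η).2 hηK)]
          · rw [zc, if_pos rfl, if_neg, add_zero]
            · have hd := hYd η
              rw [if_pos hηK] at hd
              rw [hd, sub_self]
            · rintro ⟨-, hne⟩
              exact hne (sub_self η)
          · intro b hbKf hbne
            have hbK := (hmemKf b).1 hbKf
            rw [zc, if_neg (fun h => hbne h.symm), if_neg, add_zero]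
            rintro ⟨hg, hne⟩
            have hElt : E b < E η := by
              have := hEpos _ hg hne
              rw [map_sub] at this; linarith
            have := hlc_lt η b hη hη0 hElt
            have := hbK.2.2
            omega
  -- conclusion
  obtain ⟨W, h1, h2, h3⟩ := main Λ.ncard
  have hz : ∀ η ∈ N, E η < 0 → W η = 0 := fun η hη h0 =>
    h3 η hη h0 (Set.ncard_le_ncard Set.inter_subset_left hΛfin)
  have heq0 := h2 0 hN.zero_mem
  have hs0 : (∑ᶠ β ∈ {b : A | b ∈ G ∧ b ≠ 0 ∧ (0 : A) - b ∈ N}, m₁ β (W (0 - β))) = 0 := by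
    apply finsum_mem_eq_zero_of_forall_eq_zero
    rintro β ⟨hβG, hβ0, hβN⟩
    have hneg : E (0 - β) < 0 := by
      rw [map_sub, map_zero]
      have := hEpos β hβG hβ0
      linarith
    rw [hz _ hβN hneg, map_zero]
  rw [hs0, add_zero] at heq0
  exact ⟨W 0, h1 0 hN.zero_mem, heq0⟩
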